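/- For the Bellman operator H of a finite Markov decision process, for all Q1, Q2 : S×A → ℝ and all c ∈ ℝ one has ‖H(Q1) − H(Q2) − c·e‖_∞ ≤ ‖Q1 − Q2 − c·e‖_∞; consequently H is nonexpansive both in the sup-norm, ‖H(Q1) − H(Q2)‖_∞ ≤ ‖Q1 − Q2‖_∞, and in the span seminorm, p_span(H(Q1) − H(Q2)) ≤ p_span(Q1 − Q2). -/

import Mathlib

/-- The span seminorm of a vector over a finite nonempty index set:
`p_span(x) = (max_i x_i - min_i x_i) / 2`. -/
noncomputable def pspan {I : Type*} [Fintype I] [Nonempty I] (x : I → ℝ) : ℝ :=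
  ((⨆ i, x i) - ⨅ i, x i) / 2

/-- The sup-norm `‖x‖_∞ = max_i |x_i|`. -/
noncomputable def supNorm {I : Type*} [Fintype I] [Nonempty I] (x : I → ℝ) : ℝ :=
  ⨆ i, |x i|

/-- The Bellman operator of a finite MDP:
`[H(Q)](s,a) = R(s,a) + Σ_{s'} p(s'|s,a) · max_{a'} Q(s',a')`. -/
noncomputable def bellman {S A : Type*} [Fintype S] [Nonempty A]
    (p : S × A → S → ℝ) (R : S × A → ℝ) (Q : S × A → ℝ) : S × A → ℝ :=
  fun sa => R sa + ∑ s' : S, p sa s' * ⨆ a' : A, Q (s', a')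

section helpers
variable {I : Type*} [Fintype I] [Nonempty I]

lemma bddA (f : I → ℝ) : BddAbove (Set.range f) := (Set.finite_range f).bddAbove
lemma bddB (f : I → ℝ) : BddBelow (Set.range f) := (Set.finite_range f).bddBelow

lemma abs_le_supNorm' (f : I → ℝ) (i : I) : |f i| ≤ ⨆ j, |f j| :=
  le_ciSup (bddA (fun j => |f j|)) i

lemma abs_le_supNorm (f : I → ℝ) (i : I) : |f i| ≤ supNorm f :=
  abs_le_supNorm' f i

lemma abs_ciSup_sub (f g : I → ℝ) : |(⨆ i, f i) - ⨆ i, g i| ≤ ⨆ i, |f i - g i| := by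
  rw [abs_sub_le_iff]
  constructor
  · rw [sub_le_iff_le_add]
    refine ciSup_le fun i => ?_
    calc f i ≤ g i + |f i - g i| := by
          have := le_abs_self (f i - g i); linarith
      _ ≤ (⨆ i, g i) + ⨆ i, |f i - g i| :=
          add_le_add (le_ciSup (bddA g) i) (abs_le_supNorm' (fun i => f i - g i) i)
      _ = (⨆ i, |f i - g i|) + ⨆ i, g i := add_comm _ _
  · rw [sub_le_iff_le_add]
    refine ciSup_le fun i => ?_
    calc g i ≤ f i + |f i - g i| := by
          have := neg_abs_le (f i - g i); linarith
      _ ≤ (⨆ i, f i) + ⨆ i, |f i - g i| :=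
          add_le_add (le_ciSup (bddA f) i) (abs_le_supNorm' (fun i => f i - g i) i)
      _ = (⨆ i, |f i - g i|) + ⨆ i, f i := add_comm _ _

lemma pspan_le_supNorm_shift (y : I → ℝ) (c : ℝ) :
    pspan y ≤ supNorm (fun i => y i - c) := by
  set Sn := supNorm (fun i => y i - c) with hS
  have hsup : (⨆ i, y i) ≤ c + Sn := by
    refine ciSup_le fun i => ?_
    have h : |y i - c| ≤ Sn := abs_le_supNorm (fun i => y i - c) i
    have := le_abs_self (y i - c); linarith
  have hinf : c - Sn ≤ ⨅ i, y i := by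
    refine le_ciInf fun i => ?_
    have h : |y i - c| ≤ Sn := abs_le_supNorm (fun i => y i - c) i
    have := neg_abs_le (y i - c); linarith
  simp only [pspan]; linarith
end helpers

/-- The Bellman operator is nonexpansive after any constant shift, hence nonexpansive
in the sup-norm and in the span seminorm. -/
theorem bellman_nonexpansive {S A : Type*} [Fintype S] [Fintype A] [Nonempty S] [Nonempty A]
    (p : S × A → S → ℝ) (R : S × A → ℝ)
    (hp : ∀ sa s', 0 ≤ p sa s') (hp1 : ∀ sa, ∑ s' : S, p sa s' = 1) :
    ∀ Q1 Q2 : S × A → ℝ,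
      (∀ c : ℝ, supNorm (fun sa => bellman p R Q1 sa - bellman p R Q2 sa - c)
          ≤ supNorm (fun sa => Q1 sa - Q2 sa - c)) ∧
      supNorm (bellman p R Q1 - bellman p R Q2) ≤ supNorm (Q1 - Q2) ∧
      pspan (bellman p R Q1 - bellman p R Q2) ≤ pspan (Q1 - Q2) := by
  intro Q1 Q2
  have key : ∀ c : ℝ, supNorm (fun sa => bellman p R Q1 sa - bellman p R Q2 sa - c)
      ≤ supNorm (fun sa => Q1 sa - Q2 sa - c) := by
    intro c
    set K := supNorm (fun sa => Q1 sa - Q2 sa - c) with hK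
    refine ciSup_le fun sa => ?_
    show |bellman p R Q1 sa - bellman p R Q2 sa - c| ≤ K
    have hrw : bellman p R Q1 sa - bellman p R Q2 sa - c
        = ∑ s' : S, p sa s' * ((⨆ a' : A, Q1 (s', a')) - (⨆ a' : A, Q2 (s', a')) - c) := by
      simp only [bellman]
      have h1 := hp1 sa
      rw [Finset.sum_congr rfl (fun s' _ => by ring :
        ∀ s' ∈ Finset.univ, p sa s' * ((⨆ a' : A, Q1 (s', a')) - (⨆ a' : A, Q2 (s', a')) - c)
          = p sa s' * (⨆ a' : A, Q1 (s', a')) - p sa s' * (⨆ a' : A, Q2 (s', a')) - p sa s' * c)]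
      rw [Finset.sum_sub_distrib, Finset.sum_sub_distrib, ← Finset.sum_mul, h1]
      ring
    rw [hrw]
    calc |∑ s' : S, p sa s' * ((⨆ a' : A, Q1 (s', a')) - (⨆ a' : A, Q2 (s', a')) - c)|
        ≤ ∑ s' : S, |p sa s' * ((⨆ a' : A, Q1 (s', a')) - (⨆ a' : A, Q2 (s', a')) - c)| :=
          Finset.abs_sum_le_sum_abs _ _
      _ ≤ ∑ s' : S, p sa s' * K := by
          refine Finset.sum_le_sum fun s' _ => ?_
          rw [abs_mul, abs_of_nonneg (hp sa s')]
          refine mul_le_mul_of_nonneg_left ?_ (hp sa s')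
          have h1 : (⨆ a' : A, Q2 (s', a')) + c = ⨆ a' : A, (Q2 (s', a') + c) :=
            ciSup_add (bddA (fun a' => Q2 (s', a'))) c
          have h2 : (⨆ a' : A, Q1 (s', a')) - (⨆ a' : A, Q2 (s', a')) - c
              = (⨆ a' : A, Q1 (s', a')) - ⨆ a' : A, (Q2 (s', a') + c) := by
            rw [← h1]; ring
          rw [h2]
          calc |(⨆ a' : A, Q1 (s', a')) - ⨆ a' : A, (Q2 (s', a') + c)|
              ≤ ⨆ a' : A, |Q1 (s', a') - (Q2 (s', a') + c)| := abs_ciSup_sub _ _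
            _ ≤ K := by
                refine ciSup_le fun a' => ?_
                have h : |Q1 (s', a') - Q2 (s', a') - c| ≤ K :=
                  abs_le_supNorm (fun sa => Q1 sa - Q2 sa - c) (s', a')
                exact (congrArg abs (by ring : Q1 (s', a') - (Q2 (s', a') + c)
                  = Q1 (s', a') - Q2 (s', a') - c)).trans_le h
      _ = K := by rw [← Finset.sum_mul, hp1 sa, one_mul]
  refine ⟨key, ?_, ?_⟩
  · have h := key 0
    simpa [supNorm, Pi.sub_apply] using h
  · set c := ((⨆ sa, (Q1 sa - Q2 sa)) + ⨅ sa, (Q1 sa - Q2 sa)) / 2 with hc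
    have hB : supNorm (fun sa => Q1 sa - Q2 sa - c) ≤ pspan (Q1 - Q2) := by
      refine ciSup_le fun sa => ?_
      show |Q1 sa - Q2 sa - c| ≤ _
      rw [abs_le]
      have h1 : Q1 sa - Q2 sa ≤ ⨆ sa, (Q1 sa - Q2 sa) :=
        le_ciSup (bddA (fun sa => Q1 sa - Q2 sa)) sa
      have h2 : (⨅ sa, (Q1 sa - Q2 sa)) ≤ Q1 sa - Q2 sa :=
        ciInf_le (bddB (fun sa => Q1 sa - Q2 sa)) sa
      simp only [pspan, Pi.sub_apply]
      constructor <;> rw [hc] <;> linarith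
    have hA : pspan (bellman p R Q1 - bellman p R Q2)
        ≤ supNorm (fun sa => bellman p R Q1 sa - bellman p R Q2 sa - c) := by
      have := pspan_le_supNorm_shift (bellman p R Q1 - bellman p R Q2) c
      simpa [Pi.sub_apply] using this
    calc pspan (bellman p R Q1 - bellman p R Q2)
        ≤ supNorm (fun sa => bellman p R Q1 sa - bellman p R Q2 sa - c) := hA
      _ ≤ supNorm (fun sa => Q1 sa - Q2 sa - c) := key c
      _ ≤ pspan (Q1 - Q2) := hB
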